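/- For r₁ > r₂ > 0 and r₃ > 0, define W_r(t') := ∫_ℝ 1_{(−r₁²,r₁²)}(t₁'−u) · 1_{(−r₂²,r₂²)}(t₂'−u) · 1_{(−r₃²,r₃²)}(u) du. Then for all t' ∈ ℝ²: (2/9)·min{r₂²,r₃²}·1_{P_{(r₁²+r₂²)/9, (r₂²+r₃²)/9}}(t') ≤ W_r(t') ≤ 2·min{r₂²,r₃²}·1_{P_{r₁²+r₂², r₂²+r₃²}}(t'), where P_{a,b} := {(t₁,t₂) ∈ ℝ² : |t₁−t₂| < a, |t₂| < b}. -/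

import Mathlib

noncomputable section

open MeasureTheory

/-- W_r(t') = ∫_ℝ 1_{(−r₁²,r₁²)}(t₁'−u) 1_{(−r₂²,r₂²)}(t₂'−u) 1_{(−r₃²,r₃²)}(u) du. -/
def Wfun (r₁ r₂ r₃ : ℝ) (t : ℝ × ℝ) : ℝ :=
  ∫ u : ℝ,
    (Set.Ioo (-r₁ ^ 2) (r₁ ^ 2)).indicator (fun _ => (1 : ℝ)) (t.1 - u) *
    (Set.Ioo (-r₂ ^ 2) (r₂ ^ 2)).indicator (fun _ => (1 : ℝ)) (t.2 - u) *
    (Set.Ioo (-r₃ ^ 2) (r₃ ^ 2)).indicator (fun _ => (1 : ℝ)) u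

/-- The parallelogram P_{a,b} = {(t₁,t₂) : |t₁−t₂| < a, |t₂| < b}. -/
def Pset (a b : ℝ) : Set (ℝ × ℝ) := {t | |t.1 - t.2| < a ∧ |t.2| < b}

lemma ind_shift (c A u : ℝ) :
    (Set.Ioo (-A) A).indicator (fun _ => (1:ℝ)) (c - u)
      = (Set.Ioo (c - A) (c + A)).indicator (fun _ => (1:ℝ)) u := by
  by_cases h : c - u ∈ Set.Ioo (-A) A
  · rw [Set.indicator_of_mem h, Set.indicator_of_mem]
    exact Set.mem_Ioo.mpr ⟨by linarith [h.1, h.2], by linarith [h.1, h.2]⟩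
  · rw [Set.indicator_of_notMem h, Set.indicator_of_notMem]
    simp only [Set.mem_Ioo, not_and_or, not_lt] at h ⊢
    rcases h with h | h
    · right; linarith
    · left; linarith

lemma ind_inter (s t : Set ℝ) (u : ℝ) :
    (s ∩ t).indicator (fun _ => (1:ℝ)) u
      = s.indicator (fun _ => (1:ℝ)) u * t.indicator (fun _ => (1:ℝ)) u := by
  by_cases hs : u ∈ s <;> by_cases ht : u ∈ t <;>
    simp [Set.indicator_apply, hs, ht]

lemma Wfun_eq (r₁ r₂ r₃ : ℝ) (t : ℝ × ℝ) :
    Wfun r₁ r₂ r₃ t =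
      (volume (Set.Ioo (max (max (t.1 - r₁ ^ 2) (t.2 - r₂ ^ 2)) (-r₃ ^ 2))
        (min (min (t.1 + r₁ ^ 2) (t.2 + r₂ ^ 2)) (r₃ ^ 2)))).toReal := by
  have hset : Set.Ioo (t.1 - r₁ ^ 2) (t.1 + r₁ ^ 2) ∩ Set.Ioo (t.2 - r₂ ^ 2) (t.2 + r₂ ^ 2)
      ∩ Set.Ioo (-r₃ ^ 2) (r₃ ^ 2)
      = Set.Ioo (max (max (t.1 - r₁ ^ 2) (t.2 - r₂ ^ 2)) (-r₃ ^ 2))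
        (min (min (t.1 + r₁ ^ 2) (t.2 + r₂ ^ 2)) (r₃ ^ 2)) := by
    rw [Set.Ioo_inter_Ioo, Set.Ioo_inter_Ioo]
  rw [← hset, Wfun]
  have key : ∀ u : ℝ,
      (Set.Ioo (-r₁ ^ 2) (r₁ ^ 2)).indicator (fun _ => (1:ℝ)) (t.1 - u) *
      (Set.Ioo (-r₂ ^ 2) (r₂ ^ 2)).indicator (fun _ => (1:ℝ)) (t.2 - u) *
      (Set.Ioo (-r₃ ^ 2) (r₃ ^ 2)).indicator (fun _ => (1:ℝ)) u =
      (Set.Ioo (t.1 - r₁ ^ 2) (t.1 + r₁ ^ 2) ∩ Set.Ioo (t.2 - r₂ ^ 2) (t.2 + r₂ ^ 2)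
        ∩ Set.Ioo (-r₃ ^ 2) (r₃ ^ 2)).indicator (fun _ => (1:ℝ)) u := by
    intro u
    rw [ind_inter, ind_inter, ind_shift, ind_shift]
  simp_rw [key]
  rw [MeasureTheory.integral_indicator
    (((measurableSet_Ioo.inter measurableSet_Ioo).inter measurableSet_Ioo)),
    MeasureTheory.setIntegral_const, smul_eq_mul, mul_one]
  rfl

/-- two-sided estimate for W_r in terms of indicator functions
of parallelograms. -/
theorem Wfun_two_sided (r₁ r₂ r₃ : ℝ) (h₂₁ : r₂ < r₁) (h₂ : 0 < r₂) (h₃ : 0 < r₃)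
    (t : ℝ × ℝ) :
    (2 / 9) * min (r₂ ^ 2) (r₃ ^ 2) *
        (Pset ((r₁ ^ 2 + r₂ ^ 2) / 9) ((r₂ ^ 2 + r₃ ^ 2) / 9)).indicator
          (fun _ => (1 : ℝ)) t
      ≤ Wfun r₁ r₂ r₃ t ∧
    Wfun r₁ r₂ r₃ t
      ≤ 2 * min (r₂ ^ 2) (r₃ ^ 2) *
          (Pset (r₁ ^ 2 + r₂ ^ 2) (r₂ ^ 2 + r₃ ^ 2)).indicator (fun _ => (1 : ℝ)) t := by
  have hb : (0:ℝ) < r₂ ^ 2 := by positivity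
  have hc : (0:ℝ) < r₃ ^ 2 := by positivity
  have hab : r₂ ^ 2 < r₁ ^ 2 := by nlinarith
  rw [Wfun_eq]
  set a := r₁ ^ 2 with ha'
  set b := r₂ ^ 2 with hb'
  set c := r₃ ^ 2 with hc'
  set L := max (max (t.1 - a) (t.2 - b)) (-c) with hL
  set U := min (min (t.1 + a) (t.2 + b)) c with hUdef
  have hU1 : U ≤ t.1 + a := le_trans (min_le_left _ _) (min_le_left _ _)
  have hU2 : U ≤ t.2 + b := le_trans (min_le_left _ _) (min_le_right _ _)
  have hU3 : U ≤ c := min_le_right _ _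
  have hL1 : t.1 - a ≤ L := le_trans (le_max_left _ _) (le_max_left _ _)
  have hL2 : t.2 - b ≤ L := le_trans (le_max_right _ _) (le_max_left _ _)
  have hL3 : -c ≤ L := le_max_right _ _
  rw [Real.volume_Ioo]
  constructor
  · by_cases ht : t ∈ Pset ((a + b) / 9) ((b + c) / 9)
    · rw [Set.indicator_of_mem ht, mul_one]
      obtain ⟨ht1, ht2⟩ := ht
      rw [abs_lt] at ht1 ht2
      obtain ⟨h11, h12⟩ := ht1
      obtain ⟨h21, h22⟩ := ht2
      have hUL : (2/9) * min b c ≤ U - L := by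
        have hm : (2/9) * min b c + L ≤ U := by
          rw [hUdef, hL]
          rcases min_cases b c with ⟨hm, _⟩ | ⟨hm, _⟩ <;> rw [hm] <;>
            refine le_min (le_min ?_ ?_) ?_ <;> rw [add_comm, ← le_sub_iff_add_le] <;>
            exact max_le (max_le (by linarith) (by linarith)) (by linarith)
        linarith
      have hpos : (0:ℝ) < U - L := lt_of_lt_of_le (by positivity) hUL
      rw [ENNReal.toReal_ofReal hpos.le]
      exact hUL
    · rw [Set.indicator_of_notMem ht, mul_zero]
      exact ENNReal.toReal_nonneg
  · by_cases ht : t ∈ Pset (a + b) (b + c)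
    · rw [Set.indicator_of_mem ht, mul_one]
      rcases le_or_gt (U - L) 0 with h | h
      · rw [ENNReal.ofReal_eq_zero.mpr h, ENNReal.toReal_zero]
        positivity
      · rw [ENNReal.toReal_ofReal h.le]
        rcases min_cases b c with ⟨hm, _⟩ | ⟨hm, _⟩ <;> rw [hm] <;> linarith
    · rw [Set.indicator_of_notMem ht, mul_zero]
      have hUL : U - L ≤ 0 := by
        simp only [Pset, Set.mem_setOf_eq, not_and_or, not_lt] at ht
        rcases ht with ht | ht <;> rcases le_abs.mp ht with h | h <;> linarith
      rw [ENNReal.ofReal_eq_zero.mpr hUL, ENNReal.toReal_zero]
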